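/- Let μ ∈ ℝ and σ > 0. For every ε > 0 there exists a Borel probability measure Q on ℝ with mean exactly μ and variance exactly σ² such that ∫ ((x−μ)₊)²/σ² dQ(x) > 1 − ε. Consequently sup_{Q∈H(μ,σ)} ∫ ((x−μ)₊)²/σ² dQ(x) = 1, i.e. E₀(x) = ((x−μ)₊)²/σ² is a precise e-variable for H(μ,σ). -/

import Mathlib

open MeasureTheory Set
open scoped ENNReal

/-- Mean of a distribution on ℝ. -/
noncomputable def distMean (Q : Measure ℝ) : ℝ := ∫ x, x ∂Q

/-- Variance of a distribution on ℝ. -/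
noncomputable def distVar (Q : Measure ℝ) : ℝ := ∫ x, (x - distMean Q)^2 ∂Q

/-- `H(μ,σ)`: Borel probability measures on ℝ with finite second moment,
mean at most `μ`, and variance at most `σ²`. -/
def MemH (μ σ : ℝ) (Q : Measure ℝ) : Prop :=
  IsProbabilityMeasure Q ∧ Integrable (fun x => x^2) Q ∧
    distMean Q ≤ μ ∧ distVar Q ≤ σ^2

lemma integrable_dirac'' (f : ℝ → ℝ) (a : ℝ) : Integrable f (Measure.dirac a) :=
  (integrable_const (f a)).congr (by
    rw [MeasureTheory.ae_dirac_eq]; exact Filter.eventually_pure.2 rfl)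

lemma two_point_integral (p : ℝ) (hp0 : 0 ≤ p) (hp1 : p ≤ 1) (a b : ℝ) (f : ℝ → ℝ) :
    Integrable f (ENNReal.ofReal p • Measure.dirac a + ENNReal.ofReal (1-p) • Measure.dirac b) ∧
    ∫ x, f x ∂(ENNReal.ofReal p • Measure.dirac a + ENNReal.ofReal (1-p) • Measure.dirac b)
      = p * f a + (1-p) * f b := by
  have h1 : Integrable f (ENNReal.ofReal p • Measure.dirac a) :=
    (integrable_dirac'' f a).smul_measure ENNReal.ofReal_ne_top
  have h2 : Integrable f (ENNReal.ofReal (1-p) • Measure.dirac b) :=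
    (integrable_dirac'' f b).smul_measure ENNReal.ofReal_ne_top
  refine ⟨h1.add_measure h2, ?_⟩
  rw [integral_add_measure h1 h2, integral_smul_measure, integral_smul_measure,
    integral_dirac, integral_dirac, ENNReal.toReal_ofReal hp0,
    ENNReal.toReal_ofReal (by linarith)]
  simp [smul_eq_mul]

lemma key_construct (μ σ : ℝ) (hσ : 0 < σ) (t : ℝ) (ht : 0 < t) :
    ∃ Q : Measure ℝ, IsProbabilityMeasure Q ∧ Integrable (fun x => x^2) Q ∧
      distMean Q = μ ∧ distVar Q = σ^2 ∧
      (∫ x, (max (x - μ) 0)^2 / σ^2 ∂Q) = t^2/(1+t^2) := by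
  have ht2 : (0:ℝ) < 1 + t^2 := by positivity
  set p : ℝ := 1/(1+t^2) with hp
  have hp0 : 0 ≤ p := by positivity
  have hp1 : p ≤ 1 := by rw [hp, div_le_one ht2]; nlinarith
  set a : ℝ := μ + σ*t with ha
  set b : ℝ := μ - σ/t with hb
  set Q : Measure ℝ :=
    ENNReal.ofReal p • Measure.dirac a + ENNReal.ofReal (1-p) • Measure.dirac b with hQ
  have hint : ∀ f : ℝ → ℝ, Integrable f Q ∧ ∫ x, f x ∂Q = p * f a + (1-p) * f b :=
    fun f => two_point_integral p hp0 hp1 a b f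
  have hprob : IsProbabilityMeasure Q := by
    constructor
    rw [hQ]
    simp only [Measure.add_apply, Measure.smul_apply, Measure.dirac_apply_of_mem (mem_univ _),
      smul_eq_mul, mul_one]
    rw [← ENNReal.ofReal_add hp0 (by linarith)]
    norm_num
  have hmean : distMean Q = μ := by
    have := (hint (fun x => x)).2
    rw [distMean, this, ha, hb, hp]
    field_simp
    ring
  have h1p : 1 - p = t^2/(1+t^2) := by rw [hp]; field_simp; ring
  have hvar : distVar Q = σ^2 := by
    have := (hint (fun x => (x - μ)^2)).2
    rw [distVar, hmean, this, ha, hb, hp, h1p]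
    have e1 : μ + σ*t - μ = σ*t := by ring
    have e2 : μ - σ/t - μ = -(σ/t) := by ring
    rw [e1, e2]
    field_simp
    ring
  refine ⟨Q, hprob, (hint _).1, hmean, hvar, ?_⟩
  have := (hint (fun x => (max (x - μ) 0)^2 / σ^2)).2
  rw [this, ha, hb]
  have h1 : max (μ + σ*t - μ) 0 = σ*t := by
    have e1 : μ + σ*t - μ = σ*t := by ring
    rw [e1, max_eq_left (by positivity)]
  have h2 : max (μ - σ/t - μ) 0 = 0 := by
    rw [max_eq_right]
    have : 0 < σ/t := by positivity
    linarith
  rw [h1, h2, h1p, hp]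
  field_simp
  ring

lemma upper_bound (μ σ : ℝ) (hσ : 0 < σ) (Q : Measure ℝ) (h : MemH μ σ Q) :
    ∫ x, (max (x - μ) 0)^2 / σ^2 ∂Q ≤ 1 := by
  obtain ⟨hprob, hint2, hmean, hvar⟩ := h
  set m := distMean Q with hm
  -- integrability of x
  have hint1 : Integrable (fun x => x) Q := by
    refine (hint2.add (integrable_const 1)).mono
      (measurable_id.aestronglyMeasurable) ?_
    filter_upwards with x
    have : |x| ≤ x^2 + 1 := by nlinarith [abs_nonneg x, sq_abs x, sq_nonneg (|x| - 1)]
    simpa [abs_of_nonneg (by positivity : (0:ℝ) ≤ x^2 + 1)] using this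
  have hintsq : Integrable (fun x => (x - m)^2) Q := by
    have : (fun x => (x - m)^2) = fun x => x^2 - (2*m)*x + m^2 := by
      funext x; ring
    rw [this]
    exact (hint2.sub (hint1.const_mul (2*m))).add (integrable_const _)
  have hintg : Integrable (fun x => (max (x - μ) 0)^2 / σ^2) Q := by
    refine (hintsq.div_const (σ^2)).mono ?_ ?_
    · exact ((((measurable_id.sub_const μ).max measurable_const).pow_const 2).div_const
        (σ^2)).aestronglyMeasurable
    · filter_upwards with x
      have hb : (max (x - μ) 0)^2 ≤ (x - m)^2 := by
        rcases le_or_gt x μ with hx | hx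
        · rw [max_eq_right (by linarith)]; simpa using sq_nonneg (x - m)
        · rw [max_eq_left (by linarith)]
          have h1 : 0 ≤ x - μ := by linarith
          have h2 : x - μ ≤ x - m := by linarith
          nlinarith
      have hσ2 : (0:ℝ) < σ^2 := by positivity
      rw [Real.norm_eq_abs, Real.norm_eq_abs,
        abs_of_nonneg (div_nonneg (sq_nonneg _) hσ2.le),
        abs_of_nonneg (div_nonneg (sq_nonneg _) hσ2.le)]
      exact div_le_div_of_nonneg_right hb hσ2.le
  calc ∫ x, (max (x - μ) 0)^2 / σ^2 ∂Q
      ≤ ∫ x, (x - m)^2 / σ^2 ∂Q := by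
        refine integral_mono hintg (hintsq.div_const _) ?_
        intro x
        have hb : (max (x - μ) 0)^2 ≤ (x - m)^2 := by
          rcases le_or_gt x μ with hx | hx
          · rw [max_eq_right (by linarith)]; simpa using sq_nonneg (x - m)
          · rw [max_eq_left (by linarith)]
            have h1 : 0 ≤ x - μ := by linarith
            have h2 : x - μ ≤ x - m := by linarith
            nlinarith
        exact div_le_div_of_nonneg_right hb (by positivity)
    _ = distVar Q / σ^2 := by rw [distVar, ← hm, integral_div]
    _ ≤ 1 := by
        rw [div_le_one (by positivity)]
        exact hvar

/-- for every `ε > 0` there is `Q` with mean exactly `μ` and variance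
exactly `σ²` such that `∫ ((x−μ)₊)²/σ² dQ > 1 − ε`; consequently
`sup_{Q ∈ H(μ,σ)} ∫ ((x−μ)₊)²/σ² dQ = 1`, i.e. `E₀` is a precise e-variable. -/
theorem stmt_6 (μ σ : ℝ) (hσ : 0 < σ) :
    (∀ ε > (0:ℝ), ∃ Q : Measure ℝ, IsProbabilityMeasure Q ∧
      Integrable (fun x => x^2) Q ∧ distMean Q = μ ∧ distVar Q = σ^2 ∧
      1 - ε < ∫ x, (max (x - μ) 0)^2 / σ^2 ∂Q) ∧
    IsLUB {r : ℝ | ∃ Q : Measure ℝ, MemH μ σ Q ∧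
      r = ∫ x, (max (x - μ) 0)^2 / σ^2 ∂Q} 1 := by
  have main : ∀ ε > (0:ℝ), ∃ Q : Measure ℝ, IsProbabilityMeasure Q ∧
      Integrable (fun x => x^2) Q ∧ distMean Q = μ ∧ distVar Q = σ^2 ∧
      1 - ε < ∫ x, (max (x - μ) 0)^2 / σ^2 ∂Q := by
    intro ε hε
    set t : ℝ := Real.sqrt (1/ε) with hts
    have ht : 0 < t := Real.sqrt_pos.2 (by positivity)
    have ht2 : t^2 = 1/ε := Real.sq_sqrt (by positivity)
    obtain ⟨Q, h1, h2, h3, h4, h5⟩ := key_construct μ σ hσ t ht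
    refine ⟨Q, h1, h2, h3, h4, ?_⟩
    rw [h5, ht2]
    rw [show (1:ℝ)/ε / (1 + 1/ε) = 1/(ε+1) by field_simp]
    rw [sub_lt_iff_lt_add]
    rw [div_add' _ _ _ (by positivity : (ε:ℝ)+1 ≠ 0), lt_div_iff₀ (by positivity)]
    nlinarith
  refine ⟨main, ?_, ?_⟩
  · rintro r ⟨Q, hQ, rfl⟩
    exact upper_bound μ σ hσ Q hQ
  · intro b hb
    by_contra hlt
    push_neg at hlt
    obtain ⟨Q, h1, h2, h3, h4, h5⟩ := main (1 - b) (by linarith)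
    have hmem : MemH μ σ Q := ⟨h1, h2, le_of_eq h3, le_of_eq h4⟩
    have : ∫ x, (max (x - μ) 0)^2 / σ^2 ∂Q ≤ b := hb ⟨Q, hmem, rfl⟩
    linarith [h5]
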